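/- Fix a total order on the indeterminates {X_i} and order monomials of ℤ⟪X_I⟫ first by total degree and then lexicographically; define f ≺ g iff the coefficient of the smallest monomial on which f and g differ is larger in g. Then the Magnus order on the free group F, defined by a < b iff M(a) ≺ M(b), is a bi-order on F. -/

import Mathlib

/-! Noncommutative formal power series over `ℤ` in indeterminates indexed by `I`
are modelled as coefficient functions on words (`List I`). -/

/-- Convolution (Cauchy) product of noncommutative power series. -/
def conv {I : Type*} (f g : List I → ℤ) : List I → ℤ :=
  fun w => ∑ k ∈ Finset.range (w.length + 1), f (w.take k) * g (w.drop k)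

/-- The power series `1`. -/
def oneSeries {I : Type*} : List I → ℤ := fun w => match w with | [] => 1 | _ => 0

/-- The power series `1 + X_i`, the Magnus expansion of the generator `x_i`. -/
def genSeries {I : Type*} [DecidableEq I] (i : I) : List I → ℤ :=
  fun w => if w = [] ∨ w = [i] then 1 else 0

/-- The power series `1 - X_i + X_i² - ⋯`, the Magnus expansion of `x_i⁻¹`. -/
def invGenSeries {I : Type*} [DecidableEq I] (i : I) : List I → ℤ :=
  fun w => if w = List.replicate w.length i then (-1) ^ w.length else 0

/-- The expansion of a single letter of a reduced word. -/
def letterSeries {I : Type*} [DecidableEq I] (p : I × Bool) : List I → ℤ :=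
  if p.2 then genSeries p.1 else invGenSeries p.1

/-- The Magnus expansion of an element of the free group on `I`. -/
def magnus {I : Type*} [DecidableEq I] (a : FreeGroup I) : List I → ℤ :=
  ((FreeGroup.toWord a).map letterSeries).foldr conv oneSeries

/-- Order on monomials (words): first by total degree (length), then lexicographically. -/
def monLt {I : Type*} [LinearOrder I] (w v : List I) : Prop :=
  w.length < v.length ∨ (w.length = v.length ∧ List.Lex (· < ·) w v)

/-- `f ≺ g` iff the coefficient of the smallest monomial where `f` and `g` differ
is larger in `g` (i.e. the lowest nonzero coefficient of `g - f` is positive). -/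
def seriesLt {I : Type*} [LinearOrder I] (f g : List I → ℤ) : Prop :=
  ∃ w : List I, f w < g w ∧ ∀ v : List I, monLt v w → f v = g v

/-- The Magnus order on the free group. -/
def magnusLt {I : Type*} [LinearOrder I] [DecidableEq I] (a b : FreeGroup I) : Prop :=
  seriesLt (magnus a) (magnus b)

section MagnusBiOrder
variable {I : Type*}

lemma oneSeries_nil : (oneSeries : List I → ℤ) [] = 1 := rfl
lemma oneSeries_ne {w : List I} (h : w ≠ []) : oneSeries w = 0 := by
  cases w with | nil => simp at h | cons a l => rfl

lemma conv_nil (f g : List I → ℤ) : conv f g [] = f [] * g [] := by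
  simp [conv]

lemma oneSeries_conv (f : List I → ℤ) : conv oneSeries f = f := by
  funext w
  rw [conv, Finset.sum_eq_single 0]
  · simp [oneSeries]
  · intro k hk hk0
    rw [oneSeries_ne, zero_mul]
    simp only [Finset.mem_range] at hk
    intro h
    have := congrArg List.length h
    simp only [List.length_take, List.length_nil, Nat.min_eq_zero_iff] at this
    omega
  · simp

lemma conv_oneSeries (f : List I → ℤ) : conv f oneSeries = f := by
  funext w
  rw [conv, Finset.sum_eq_single w.length]
  · simp [oneSeries]
  · intro k hk hk0
    rw [oneSeries_ne, mul_zero]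
    simp only [Finset.mem_range] at hk
    intro h
    have := congrArg List.length h
    simp only [List.length_drop, List.length_nil] at this
    omega
  · simp

lemma conv_assoc (f g h : List I → ℤ) : conv (conv f g) h = conv f (conv g h) := by
  funext w
  set n := w.length with hn
  have L : conv (conv f g) h w
      = ∑ k ∈ Finset.range (n+1), ∑ j ∈ Finset.range (n+1),
          (if j ≤ k then f (w.take j) * (g ((w.take k).drop j) * h (w.drop k)) else 0) := by
    rw [conv]
    apply Finset.sum_congr rfl
    intro k hk
    rw [Finset.mem_range] at hk
    have hlen : (w.take k).length = k := by
      rw [List.length_take]; omega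
    rw [conv, hlen, Finset.sum_mul]
    have hsub : Finset.range (k+1) ⊆ Finset.range (n+1) := by
      apply Finset.range_subset_range.mpr; omega
    rw [← Finset.sum_subset hsub]
    · apply Finset.sum_congr rfl
      intro j hj
      rw [Finset.mem_range] at hj
      rw [if_pos (by omega : j ≤ k), List.take_take, min_eq_left (by omega : j ≤ k), mul_assoc]
    · intro j _ hj
      rw [Finset.mem_range] at hj
      rw [if_neg (by omega)]
  have R : conv f (conv g h) w
      = ∑ j ∈ Finset.range (n+1), ∑ k ∈ Finset.range (n+1),
          (if j ≤ k then f (w.take j) * (g ((w.take k).drop j) * h (w.drop k)) else 0) := by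
    rw [conv]
    apply Finset.sum_congr rfl
    intro j hj
    rw [Finset.mem_range] at hj
    have hsub : Finset.Ico j (n+1) ⊆ Finset.range (n+1) := by
      intro k hk; rw [Finset.mem_Ico] at hk; rw [Finset.mem_range]; omega
    rw [← Finset.sum_subset hsub (by
      intro k hk1 hk2
      rw [Finset.mem_range] at hk1
      rw [Finset.mem_Ico] at hk2
      rw [if_neg]
      intro hjk
      exact hk2 ⟨hjk, hk1⟩)]
    rw [Finset.sum_Ico_eq_sum_range,
      (by omega : n + 1 - j = n - j + 1)]
    have hlen : (w.drop j).length = n - j := by rw [List.length_drop]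
    rw [conv, hlen, Finset.mul_sum]
    apply Finset.sum_congr rfl
    intro m hm
    rw [Finset.mem_range] at hm
    rw [if_pos (by omega : j ≤ j + m)]
    rw [List.drop_take, (by omega : j + m - j = m), List.drop_drop]
  rw [L, R, Finset.sum_comm]

variable [DecidableEq I]

lemma letterSeries_nil (p : I × Bool) : letterSeries p [] = 1 := by
  rcases p with ⟨i, b⟩
  cases b <;> simp [letterSeries, genSeries, invGenSeries]

lemma letterSeries_single (i : I) (b : Bool) (a : I) :
    letterSeries (i, b) [a] = if a = i then (if b then 1 else -1) else 0 := by
  cases b <;> by_cases hai : a = i <;>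
    simp [letterSeries, genSeries, invGenSeries, hai]

lemma letterSeries_eq_zero (i : I) (b : Bool) {u : List I} (hlen : 2 ≤ u.length)
    (h2 : b = true ∨ u.take 2 ≠ [i, i]) : letterSeries (i, b) u = 0 := by
  cases b with
  | true =>
    have h1 : u ≠ [] := by intro h; rw [h] at hlen; simp at hlen
    have h3 : u ≠ [i] := by intro h; rw [h] at hlen; simp at hlen
    simp [letterSeries, genSeries, h1, h3]
  | false =>
    rcases h2 with h2 | h2
    · simp at h2
    rw [letterSeries]
    simp only [Bool.false_eq_true, if_false, invGenSeries]
    rw [if_neg]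
    intro h
    apply h2
    rw [h, List.take_replicate]
    rw [min_eq_left hlen]
    rfl

lemma conv_letter (i : I) (b : Bool) (g : List I → ℤ) (v : List I)
    (hv : b = true ∨ v.take 2 ≠ [i, i]) :
    conv (letterSeries (i, b)) g v
      = g v + (if v.head? = some i then (if b then 1 else -1) * g v.tail else 0) := by
  rw [conv]
  have key : ∀ k ∈ Finset.range (v.length + 1),
      letterSeries (i, b) (v.take k) * g (v.drop k)
        = (if k = 0 then g v else 0)
          + (if k = 1 ∧ v.head? = some i then (if b then (1:ℤ) else -1) * g v.tail else 0) := by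
    intro k hk
    rw [Finset.mem_range] at hk
    match k with
    | 0 => simp [letterSeries_nil]
    | 1 =>
      match v with
      | [] => simp at hk
      | a :: t =>
        simp only [List.take, List.drop, letterSeries_single, List.head?]
        by_cases hai : a = i <;> simp [hai]
    | (k+2) =>
      rw [letterSeries_eq_zero i b (u := v.take (k+2)) ?_ ?_, zero_mul]
      · simp
      · rw [List.length_take]; omega
      · rcases hv with hv | hv
        · exact Or.inl hv
        · right; rw [List.take_take]; simpa using hv
  rw [Finset.sum_congr rfl key, Finset.sum_add_distrib]
  congr 1
  · rw [Finset.sum_ite_eq' (Finset.range (v.length + 1)) 0 (fun _ => g v)]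
    simp
  · by_cases hP : v.head? = some i
    · have hv0 : v ≠ [] := by intro h; rw [h] at hP; simp at hP
      have hl : 0 < v.length := List.length_pos_iff.mpr hv0
      simp only [hP, and_true]
      rw [Finset.sum_ite_eq' (Finset.range (v.length + 1)) 1
        (fun _ => (if b then (1:ℤ) else -1) * g v.tail),
        if_pos (by rw [Finset.mem_range]; omega)]
      simp
    · simp [hP]

lemma rev_conv (f g : List I → ℤ) (w : List I) :
    conv f g w.reverse = conv (fun u => g u.reverse) (fun u => f u.reverse) w := by
  rw [conv, conv]
  simp only [List.length_reverse]
  rw [← Finset.sum_range_reflect]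
  apply Finset.sum_congr rfl
  intro k hk
  rw [Finset.mem_range] at hk
  have e1 : w.length + 1 - 1 - k = w.length - k := by omega
  rw [e1]
  rw [List.take_reverse, List.drop_reverse]
  have e2 : w.length - (w.length - k) = k := by omega
  rw [e2, mul_comm]

lemma invGen_cons (i a : I) (t : List I) :
    invGenSeries i (a :: t) = if a = i then -invGenSeries i t else 0 := by
  by_cases hai : a = i
  · subst hai
    rw [if_pos rfl, invGenSeries, invGenSeries]
    simp only [List.length_cons]
    by_cases ht : t = List.replicate t.length a
    · rw [if_pos, if_pos ht]
      · ring
      · rw [List.replicate_succ]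
        exact List.cons_inj_right a |>.mpr ht
    · rw [if_neg, if_neg ht, neg_zero]
      rw [List.replicate_succ]
      intro h
      exact ht (List.cons_inj_right a |>.mp h)
  · rw [if_neg hai, invGenSeries]
    simp only [List.length_cons]
    rw [if_neg]
    rw [List.replicate_succ]
    intro h
    exact hai (List.head_eq_of_cons_eq h)

lemma oneSeries_reverse (w : List I) : oneSeries w.reverse = oneSeries w := by
  cases w with
  | nil => rfl
  | cons a t => rw [oneSeries_ne (by simp), oneSeries_ne (by simp)]

lemma genSeries_reverse (i : I) (u : List I) : genSeries i u.reverse = genSeries i u := by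
  rw [genSeries, genSeries]
  congr 1
  simp [List.reverse_eq_iff]

lemma invGenSeries_reverse (i : I) (u : List I) :
    invGenSeries i u.reverse = invGenSeries i u := by
  rw [invGenSeries, invGenSeries]
  simp only [List.length_reverse]
  congr 1
  simp [List.reverse_eq_iff, List.reverse_replicate]

lemma conv_gen_invGen (i : I) :
    conv (letterSeries (i, true)) (letterSeries (i, !true)) = oneSeries := by
  funext w
  rw [conv_letter i true _ w (Or.inl rfl)]
  cases w with
  | nil => simp [letterSeries_nil, oneSeries_nil]
  | cons a t =>
    rw [oneSeries_ne (by simp)]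
    have hls : letterSeries (i, !true) = invGenSeries i := rfl
    rw [hls]
    simp only [List.head?, List.tail]
    rw [invGen_cons]
    by_cases hai : a = i <;> simp [hai]

lemma conv_letter_letter (i : I) (b : Bool) :
    conv (letterSeries (i, b)) (letterSeries (i, !b)) = oneSeries := by
  cases b with
  | true => exact conv_gen_invGen i
  | false =>
    funext w
    have h1 : conv (letterSeries (i, false)) (letterSeries (i, !false)) w
        = conv (letterSeries (i, false)) (letterSeries (i, !false)) w.reverse.reverse := by
      rw [List.reverse_reverse]
    rw [h1, rev_conv]
    have h2 : (fun u : List I => letterSeries (i, !false) u.reverse) = letterSeries (i, true) := by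
      funext u
      show genSeries i u.reverse = genSeries i u
      exact genSeries_reverse i u
    have h3 : (fun u : List I => letterSeries (i, false) u.reverse) = letterSeries (i, false) := by
      funext u
      show invGenSeries i u.reverse = invGenSeries i u
      exact invGenSeries_reverse i u
    rw [h2, h3]
    have h4 : letterSeries (i, false) = letterSeries (i, !true) := rfl
    rw [h4, conv_gen_invGen i, oneSeries_reverse]

def Pl (L : List (I × Bool)) : List I → ℤ := (L.map letterSeries).foldr conv oneSeries

lemma Pl_nil : (Pl [] : List I → ℤ) = oneSeries := rfl

lemma Pl_cons (p : I × Bool) (L : List (I × Bool)) :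
    Pl (p :: L) = conv (letterSeries p) (Pl L) := rfl

lemma Pl_append (A B : List (I × Bool)) : Pl (A ++ B) = conv (Pl A) (Pl B) := by
  induction A with
  | nil => rw [Pl_nil, oneSeries_conv]; rfl
  | cons p A ih =>
    rw [List.cons_append, Pl_cons, Pl_cons, ih, ← conv_assoc]

lemma Pl_step {L₁ L₂ : List (I × Bool)} (h : FreeGroup.Red.Step L₁ L₂) : Pl L₁ = Pl L₂ := by
  cases h with
  | @not A B x b =>
    rw [Pl_append, Pl_append, Pl_cons, Pl_cons,
      ← conv_assoc (letterSeries (x, b)) (letterSeries (x, !b)) (Pl B),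
      conv_letter_letter, oneSeries_conv]

lemma Pl_red {L₁ L₂ : List (I × Bool)} (h : FreeGroup.Red L₁ L₂) : Pl L₁ = Pl L₂ := by
  induction h with
  | refl => rfl
  | tail _ h2 ih => rw [ih, Pl_step h2]

lemma magnus_eq (a : FreeGroup I) : magnus a = Pl a.toWord := rfl

lemma magnus_mk (L : List (I × Bool)) : magnus (FreeGroup.mk L) = Pl L := by
  rw [magnus_eq, FreeGroup.toWord_mk]
  exact (Pl_red (FreeGroup.reduce.red)).symm

lemma magnus_mul (a b : FreeGroup I) : magnus (a * b) = conv (magnus a) (magnus b) := by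
  have h : a * b = FreeGroup.mk (a.toWord ++ b.toWord) := by
    rw [← FreeGroup.mul_mk, FreeGroup.mk_toWord, FreeGroup.mk_toWord]
  rw [h, magnus_mk, Pl_append, magnus_eq, magnus_eq]

lemma magnus_one : (magnus 1 : List I → ℤ) = oneSeries := by
  rw [magnus_eq, FreeGroup.toWord_one, Pl_nil]

lemma Pl_nil_coeff (L : List (I × Bool)) : Pl L [] = 1 := by
  induction L with
  | nil => rfl
  | cons p L ih => rw [Pl_cons, conv_nil, letterSeries_nil, ih, one_mul]

lemma magnus_nil_coeff (a : FreeGroup I) : magnus a [] = 1 := Pl_nil_coeff _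

def trace : List I → List I
  | [] => []
  | a :: l => if (trace l).head? = some a then trace l else a :: trace l

lemma trace_cons (a : I) (l : List I) :
    trace (a :: l) = if (trace l).head? = some a then trace l else a :: trace l := rfl

lemma trace_head (a : I) (l : List I) : (trace (a :: l)).head? = some a := by
  rw [trace_cons]
  split
  · assumption
  · rfl

lemma trace_chain (l : List I) : (trace l).Chain' (· ≠ ·) := by
  induction l with
  | nil => exact List.isChain_nil
  | cons a l ih =>
    rw [trace_cons]
    split
    · exact ih
    · refine List.isChain_cons.mpr ?_
      refine ⟨?_, ih⟩
      intro y hy h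
      subst h
      exact ‹¬(trace l).head? = some a› hy

lemma chain'_take2 {v : List I} (hv : v.Chain' (· ≠ ·)) (i : I) : v.take 2 ≠ [i, i] := by
  match v with
  | [] => simp
  | [a] => simp
  | a :: c :: r =>
    intro h
    simp only [List.take, List.cons.injEq] at h
    obtain ⟨h1, h2, -⟩ := h
    exact (List.isChain_cons_cons.mp hv).1 (h1.trans h2.symm)

lemma claimC (L : List (I × Bool)) (v : List I) (hv : v.Chain' (· ≠ ·))
    (hcase : (trace (L.map Prod.fst)).length < v.length ∨
      (v.length = (trace (L.map Prod.fst)).length ∧ v ≠ [] ∧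
        ∀ p ∈ L.head?, v.head? ≠ some p.1)) :
    Pl L v = 0 := by
  induction L generalizing v with
  | nil =>
    rcases hcase with h | ⟨h1, h2, -⟩
    · simp only [List.map_nil] at h
      rw [Pl_nil, oneSeries_ne]
      intro he; rw [he] at h; simp [trace] at h
    · simp only [List.map_nil] at h1
      simp [trace] at h1
      exact absurd h1 h2
  | cons p L' IH =>
    obtain ⟨i, b⟩ := p
    rw [Pl_cons, conv_letter i b _ v (Or.inr (chain'_take2 hv i))]
    have hmap : ((⟨i, b⟩ : I × Bool) :: L').map Prod.fst = i :: L'.map Prod.fst := rfl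
    rw [hmap] at hcase
    set m := L'.map Prod.fst with hm
    by_cases hmatch : (trace m).head? = some i
    · -- the new letter merges into the first block
      have ht : trace (i :: m) = trace m := by rw [trace_cons, if_pos hmatch]
      rw [ht] at hcase
      have hm_ne : trace m ≠ [] := by
        intro h; rw [h] at hmatch; simp at hmatch
      have hs1 : 1 ≤ (trace m).length := by
        rcases List.length_pos_iff.mpr hm_ne with h; omega
      -- L' is nonempty with head generator i
      have hL' : ∀ p ∈ L'.head?, p.1 = i := by
        intro q hq
        match L', hq with
        | q :: M, hq =>
          simp only [List.head?_cons, Option.mem_def, Option.some.injEq] at hq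
          subst hq
          have : (trace (q.1 :: M.map Prod.fst)).head? = some q.1 := trace_head _ _
          rw [hm] at hmatch
          simp only [List.map_cons] at hmatch
          rw [this] at hmatch
          exact (Option.some.injEq _ _ ▸ hmatch).symm ▸ rfl
      rcases hcase with hlen | ⟨hlen, hne, hhead⟩
      · -- v longer than the trace
        have h1 : Pl L' v = 0 := IH v hv (Or.inl hlen)
        rw [h1]
        by_cases hhv : v.head? = some i
        · rw [if_pos hhv]
          have hvne : v ≠ [] := by intro h; rw [h] at hhv; simp at hhv
          have htail_chain : v.tail.Chain' (· ≠ ·) := List.IsChain.tail hv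
          have hvt : v.tail.length = v.length - 1 := by
            cases v with | nil => simp at hvne | cons a t => simp
          have h2 : Pl L' v.tail = 0 := by
            rcases lt_or_eq_of_le (by omega : (trace m).length ≤ v.tail.length) with h | h
            · exact IH v.tail htail_chain (Or.inl h)
            · refine IH v.tail htail_chain (Or.inr ⟨h.symm, ?_, ?_⟩)
              · intro he; rw [he, List.length_nil] at h; omega
              · intro q hq
                have hq1 : q.1 = i := hL' q hq
                rw [hq1]
                -- head of tail differs from i since v = i :: v.tail and v chain'
                cases v with
                | nil => simp at hvne
                | cons a t =>
                  simp only [List.head?_cons, Option.some.injEq] at hhv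
                  subst hhv
                  simp only [List.tail_cons]
                  intro hth
                  rcases t with _ | ⟨c, r⟩
                  · simp at hth
                  · simp only [List.head?_cons, Option.some.injEq] at hth
                    exact (List.isChain_cons_cons.mp hv).1 hth.symm
          rw [h2, mul_zero, add_zero]
        · rw [if_neg hhv, add_zero]
      · -- v has the same length as the trace but different head
        have hhv : v.head? ≠ some i := hhead (i, b) rfl
        rw [if_neg hhv, add_zero]
        exact IH v hv (Or.inr ⟨hlen, hne, fun q hq => by rw [hL' q hq]; exact hhv⟩)
    · -- the new letter starts a new block
      have ht : trace (i :: m) = i :: trace m := by rw [trace_cons, if_neg hmatch]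
      rw [ht] at hcase
      simp only [List.length_cons] at hcase
      rcases hcase with hlen | ⟨hlen, hne, hhead⟩
      · have h1 : Pl L' v = 0 := IH v hv (Or.inl (by omega))
        rw [h1]
        by_cases hhv : v.head? = some i
        · rw [if_pos hhv]
          have hvne : v ≠ [] := by intro h; rw [h] at hhv; simp at hhv
          have hvt : v.tail.length = v.length - 1 := by
            cases v with | nil => simp at hvne | cons a t => simp
          have h2 : Pl L' v.tail = 0 :=
            IH v.tail (List.IsChain.tail hv) (Or.inl (by omega))
          rw [h2, mul_zero, add_zero]
        · rw [if_neg hhv, add_zero]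
      · have hhv : v.head? ≠ some i := hhead (i, b) rfl
        rw [if_neg hhv, add_zero]
        exact IH v hv (Or.inl (by omega))

/-- Reducedness as a chain condition: adjacent letters with equal generator have equal sign. -/
def RedChain (L : List (I × Bool)) : Prop :=
  L.Chain' (fun p q => p.1 = q.1 → p.2 = q.2)

lemma skip_lemma (i : I) : ∀ (M : List (I × Bool)) (v : List I), v.head? ≠ some i →
    Pl (M.dropWhile (fun q => decide (q.1 = i))) v = Pl M v := by
  intro M
  induction M with
  | nil => intro v _; rfl
  | cons q M ih =>
    intro v hv
    by_cases hq : q.1 = i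
    · rw [List.dropWhile_cons_of_pos (by simp [hq])]
      rw [ih v hv, Pl_cons]
      obtain ⟨j, c⟩ := q
      simp only at hq
      subst hq
      rw [conv_letter j c _ v (Or.inr ?_)]
      · rw [if_neg hv, add_zero]
      · intro h2
        apply hv
        match v, h2 with
        | a :: c :: r, h2 =>
          simp only [List.take, List.cons.injEq] at h2
          rw [List.head?_cons, h2.1]
    · rw [List.dropWhile_cons_of_neg (by simp [hq])]

lemma trace_drop : ∀ (L' : List (I × Bool)) (i : I) (b : Bool),
    ((trace ((((i, b) :: L').dropWhile (fun q => decide (q.1 = i))).map Prod.fst)).head?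
        ≠ some i) ∧
    trace (((i, b) :: L').map Prod.fst)
      = i :: trace ((((i, b) :: L').dropWhile (fun q => decide (q.1 = i))).map Prod.fst) := by
  intro L'
  induction L' with
  | nil =>
    intro i b
    rw [List.dropWhile_cons_of_pos (by simp)]
    refine ⟨by simp [trace], by simp [trace]⟩
  | cons q M IH =>
    intro i b
    rw [List.dropWhile_cons_of_pos (by simp)]
    by_cases hq : q.1 = i
    · obtain ⟨h1, h2⟩ := IH i q.2
      rw [List.dropWhile_cons_of_pos (by simp [hq])] at h1 h2 ⊢
      refine ⟨h1, ?_⟩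
      have hmap : ((i, b) :: q :: M).map Prod.fst = i :: (q :: M).map Prod.fst := rfl
      have hmap2 : ((i, q.2) :: M).map Prod.fst = i :: M.map Prod.fst := rfl
      have hmap3 : (q :: M).map Prod.fst = i :: M.map Prod.fst := by
        rw [List.map_cons, hq]
      rw [hmap2] at h2
      rw [hmap, hmap3, trace_cons, if_pos]
      · exact h2
      · rw [h2]; rfl
    · rw [List.dropWhile_cons_of_neg (by simp [hq])]
      have hh : (trace ((q :: M).map Prod.fst)).head? = some q.1 := by
        rw [List.map_cons]; exact trace_head _ _
      constructor
      · rw [hh]; intro h; exact hq (Option.some.inj h)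
      · have hmap : ((i, b) :: q :: M).map Prod.fst = i :: (q :: M).map Prod.fst := rfl
        rw [hmap, trace_cons, if_neg]
        rw [hh]
        intro h; exact hq (Option.some.inj h)

lemma keyLemma : ∀ (L' : List (I × Bool)) (i : I) (b : Bool),
    RedChain ((i, b) :: L') →
    ∃ e : ℤ, 1 ≤ (if b then (1:ℤ) else -1) * e ∧
      Pl ((i, b) :: L') (trace (((i, b) :: L').map Prod.fst))
        = e * Pl (L'.dropWhile (fun q => decide (q.1 = i)))
            (trace ((L'.dropWhile (fun q => decide (q.1 = i))).map Prod.fst)) := by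
  intro L'
  induction L' with
  | nil =>
    intro i b _
    refine ⟨if b then 1 else -1, by cases b <;> norm_num, ?_⟩
    have htr : trace (((i, b) :: ([] : List (I × Bool))).map Prod.fst) = [i] := by
      simp [trace]
    rw [htr, Pl_cons, Pl_nil,
      conv_letter i b _ [i] (Or.inr (by simp)), List.head?_cons, if_pos rfl]
    rw [oneSeries_ne (by simp), List.tail_cons, oneSeries_nil]
    simp [trace, Pl_nil, oneSeries_nil]
  | cons q M IH =>
    intro i b hred
    by_cases hq : q.1 = i
    · -- same generator: merge with first syllable
      have hb : q.2 = b := ((List.isChain_cons_cons.mp hred).1 hq.symm).symm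
      have hq' : q = (i, b) := by
        obtain ⟨q1, q2⟩ := q; simp only at hq hb; rw [hq, hb]
      subst hq'
      obtain ⟨e', he', hPl'⟩ := IH i b (List.isChain_cons_cons.mp hred).2
      obtain ⟨hd1, hd2⟩ := trace_drop M i b
      rw [List.dropWhile_cons_of_pos (by simp)] at hd1 hd2
      rw [List.dropWhile_cons_of_pos (by simp)]
      set D := M.dropWhile (fun q => decide (q.1 = i)) with hD
      set wD := trace (D.map Prod.fst) with hwD
      have htr : trace ((((i, b) :: (i, b) :: M)).map Prod.fst)
          = trace (((i, b) :: M).map Prod.fst) := by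
        show trace (i :: ((i, b) :: M).map Prod.fst) = _
        rw [trace_cons, if_pos]
        rw [List.map_cons]
        exact trace_head _ _
      rw [htr, Pl_cons,
        conv_letter i b _ _ (Or.inr (chain'_take2 (trace_chain _) i))]
      rw [hd2] at hPl' ⊢
      rw [List.head?_cons, if_pos rfl, List.tail_cons, hPl']
      have hskip : Pl ((i, b) :: M) wD = Pl D wD := by
        rw [← skip_lemma i ((i, b) :: M) wD hd1,
          List.dropWhile_cons_of_pos (by simp)]
      rw [hskip]
      refine ⟨e' + (if b then 1 else -1), ?_, by ring⟩
      cases b <;> simp at he' ⊢ <;> omega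
    · -- new syllable
      have htr : trace ((((i, b) :: q :: M)).map Prod.fst)
          = i :: trace ((q :: M).map Prod.fst) := by
        show trace (i :: ((q :: M).map Prod.fst)) = _
        rw [trace_cons, if_neg]
        rw [List.map_cons, trace_head]
        intro h; exact hq (Option.some.inj h)
      rw [List.dropWhile_cons_of_neg (by simp [hq])]
      set w' := trace ((q :: M).map Prod.fst) with hw'
      refine ⟨if b then 1 else -1, by cases b <;> norm_num, ?_⟩
      rw [htr, Pl_cons]
      have hchain2 : (i :: w').Chain' (· ≠ ·) := by
        rw [← htr]; exact trace_chain _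
      rw [conv_letter i b _ (i :: w') (Or.inr (chain'_take2 hchain2 i)),
        List.head?_cons, if_pos rfl, List.tail_cons]
      have hzero : Pl (q :: M) (i :: w') = 0 := by
        apply claimC _ _ hchain2
        left
        simp [hw']
      rw [hzero, zero_add]

lemma Pl_trace_ne : ∀ (n : ℕ) (L : List (I × Bool)), L.length ≤ n → RedChain L → L ≠ [] →
    Pl L (trace (L.map Prod.fst)) ≠ 0 := by
  intro n
  induction n with
  | zero =>
    intro L hL _ hne
    interval_cases h : L.length
    · exact absurd (List.length_eq_zero_iff.mp h) hne
  | succ n ih =>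
    intro L hL hred hne
    match L, hne with
    | (i, b) :: L', _ =>
      obtain ⟨e, he, hPl⟩ := keyLemma L' i b hred
      rw [hPl]
      apply mul_ne_zero
      · intro h; rw [h, mul_zero] at he; omega
      set D := L'.dropWhile (fun q => decide (q.1 = i)) with hD
      by_cases hDnil : D = []
      · rw [hDnil]
        simp [Pl_nil, trace, oneSeries_nil]
      · have hsuff : D <:+ L' := List.dropWhile_suffix _
        have hlen : D.length ≤ L'.length := hsuff.length_le
        have hlen2 : L'.length ≤ n := by
          simp only [List.length_cons] at hL; omega
        have hchain : RedChain D :=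
          List.IsChain.suffix (List.IsChain.tail hred) hsuff
        exact ih D (by omega) hchain hDnil

lemma reduced_chain : ∀ (L : List (I × Bool)),
    (∀ (A B : List (I × Bool)) (x : I) (c : Bool), L ≠ A ++ (x, c) :: (x, !c) :: B) →
    RedChain L := by
  intro L
  induction L with
  | nil => intro _; exact List.isChain_nil
  | cons p M IH =>
    intro h
    cases M with
    | nil => exact List.isChain_singleton p
    | cons q M' =>
      rw [RedChain]; refine List.isChain_cons_cons.mpr ?_
      constructor
      · intro h1
        by_contra h2
        have hq : q = (p.1, !p.2) := by
          obtain ⟨q1, q2⟩ := q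
          obtain ⟨p1, p2⟩ := p
          simp only at h1 h2
          rw [Prod.mk.injEq]
          refine ⟨h1.symm, ?_⟩
          revert h2
          cases p2 <;> cases q2 <;> simp
        exact h [] M' p.1 p.2 (by rw [hq]; rfl)
      · apply IH
        intro A B x c hEq
        exact h (p :: A) B x c (by rw [hEq]; rfl)

lemma toWord_redchain (a : FreeGroup I) : RedChain a.toWord := by
  apply reduced_chain
  intro A B x c hEq
  exact @FreeGroup.reduce.not I _ False a.toWord A B x c
    (by rw [FreeGroup.reduce_toWord, hEq])

lemma magnus_ne_one {a : FreeGroup I} (ha : a ≠ 1) : magnus a ≠ oneSeries := by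
  have hne : a.toWord ≠ [] := fun h => ha (FreeGroup.toWord_eq_nil_iff.mp h)
  have hkey : Pl a.toWord (trace (a.toWord.map Prod.fst)) ≠ 0 :=
    Pl_trace_ne a.toWord.length a.toWord le_rfl (toWord_redchain a) hne
  intro h
  apply hkey
  rw [← magnus_eq, h]
  apply oneSeries_ne
  match hw : a.toWord, hne with
  | (i, b) :: L', _ =>
    show trace (i :: L'.map Prod.fst) ≠ []
    rw [trace_cons]
    by_cases hh : (trace (L'.map Prod.fst)).head? = some i
    · rw [if_pos hh]; intro hnil; rw [hnil] at hh; simp at hh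
    · rw [if_neg hh]; simp

lemma magnus_inj {a b : FreeGroup I} (h : magnus a = magnus b) : a = b := by
  by_contra hne
  have h1 : a * b⁻¹ ≠ 1 := by
    intro h2
    exact hne (eq_of_div_eq_one (by rwa [div_eq_mul_inv]))
  apply magnus_ne_one h1
  rw [magnus_mul, h, ← magnus_mul]
  simp [magnus_one]

section Order
variable [LinearOrder I]

lemma monLt_trans {u v w : List I} (h1 : monLt u v) (h2 : monLt v w) : monLt u w := by
  rcases h1 with h1 | ⟨e1, l1⟩ <;> rcases h2 with h2 | ⟨e2, l2⟩
  · left; omega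
  · left; omega
  · left; omega
  · right
    refine ⟨e1.trans e2, ?_⟩
    exact List.lex_trans lt_trans l1 l2

lemma monLt_trichot (u v : List I) : monLt u v ∨ u = v ∨ monLt v u := by
  rcases lt_trichotomy u.length v.length with h | h | h
  · exact Or.inl (Or.inl h)
  · rcases @trichotomous (List I) (List.Lex (· < ·)) _ u v
      with hl | he | hl
    · exact Or.inl (Or.inr ⟨h, hl⟩)
    · exact Or.inr (Or.inl he)
    · exact Or.inr (Or.inr (Or.inr ⟨h.symm, hl⟩))
  · exact Or.inr (Or.inr (Or.inl h))

lemma monLt_take {w : List I} {k : ℕ} (h : k < w.length) : monLt (w.take k) w :=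
  Or.inl (by rw [List.length_take]; omega)

lemma monLt_drop {w : List I} {k : ℕ} (hk : 0 < k) (hw : 0 < w.length) :
    monLt (w.drop k) w :=
  Or.inl (by rw [List.length_drop]; omega)

lemma seriesLt_trans {f g h : List I → ℤ} (h1 : seriesLt f g) (h2 : seriesLt g h) :
    seriesLt f h := by
  obtain ⟨w1, hw1, hm1⟩ := h1
  obtain ⟨w2, hw2, hm2⟩ := h2
  rcases monLt_trichot w1 w2 with hc | hc | hc
  · exact ⟨w1, by rw [← hm2 w1 hc]; exact hw1,
      fun v hv => (hm1 v hv).trans (hm2 v (monLt_trans hv hc))⟩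
  · subst hc
    exact ⟨w1, hw1.trans hw2, fun v hv => (hm1 v hv).trans (hm2 v hv)⟩
  · exact ⟨w2, by rw [hm1 w2 hc]; exact hw2,
      fun v hv => (hm1 v (monLt_trans hv hc)).trans (hm2 v hv)⟩

lemma seriesLt_conv_right (f g h : List I → ℤ) (hone : h [] = 1)
    (hlt : seriesLt f g) : seriesLt (conv f h) (conv g h) := by
  obtain ⟨w, hw, hmin⟩ := hlt
  refine ⟨w, ?_, ?_⟩
  · rw [conv, conv, Finset.sum_range_succ, Finset.sum_range_succ]
    have heq : ∑ k ∈ Finset.range w.length, f (w.take k) * h (w.drop k)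
        = ∑ k ∈ Finset.range w.length, g (w.take k) * h (w.drop k) := by
      apply Finset.sum_congr rfl
      intro k hk
      rw [Finset.mem_range] at hk
      rw [hmin _ (monLt_take hk)]
    rw [heq]
    apply add_lt_add_right
    rw [List.take_length, List.drop_length, hone, mul_one, mul_one]
    exact hw
  · intro v hv
    rw [conv, conv]
    apply Finset.sum_congr rfl
    intro k hk
    rw [Finset.mem_range] at hk
    rcases eq_or_lt_of_le (by omega : k ≤ v.length) with he | hlt'
    · subst he
      rw [List.take_length, hmin v hv]
    · rw [hmin _ (monLt_trans (monLt_take hlt') hv)]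

lemma seriesLt_conv_left (f g h : List I → ℤ) (hone : h [] = 1)
    (hlt : seriesLt f g) : seriesLt (conv h f) (conv h g) := by
  obtain ⟨w, hw, hmin⟩ := hlt
  refine ⟨w, ?_, ?_⟩
  · rw [conv, conv, Finset.sum_range_succ', Finset.sum_range_succ']
    have heq : ∑ k ∈ Finset.range w.length, h (w.take (k+1)) * f (w.drop (k+1))
        = ∑ k ∈ Finset.range w.length, h (w.take (k+1)) * g (w.drop (k+1)) := by
      apply Finset.sum_congr rfl
      intro k hk
      rw [Finset.mem_range] at hk
      rw [hmin _ (monLt_drop (by omega) (by omega))]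
    rw [heq]
    apply add_lt_add_right
    rw [List.take_zero, List.drop_zero, hone, one_mul, one_mul]
    exact hw
  · intro v hv
    rw [conv, conv]
    apply Finset.sum_congr rfl
    intro k hk
    rw [Finset.mem_range] at hk
    rcases Nat.eq_zero_or_pos k with he | hpos
    · subst he
      rw [List.drop_zero, hmin v hv]
    · rcases Nat.eq_zero_or_pos v.length with hv0 | hv0
      · have hvnil : v = [] := List.length_eq_zero_iff.mp hv0
        subst hvnil
        rw [List.length_nil] at hk
        omega
      · rw [hmin _ (monLt_trans (monLt_drop hpos hv0) hv)]

lemma letter_support {p : I × Bool} {u : List I} (h : letterSeries p u ≠ 0) :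
    ∀ x ∈ u, x = p.1 := by
  obtain ⟨i, b⟩ := p
  cases b with
  | true =>
    by_cases hc : u = [] ∨ u = [i]
    · rcases hc with hc | hc <;> subst hc <;> intro x hx <;> simp_all
    · exfalso; apply h; simp [letterSeries, genSeries, hc]
  | false =>
    by_cases hc : u = List.replicate u.length i
    · intro x hx
      exact List.eq_of_mem_replicate (hc ▸ hx)
    · exfalso; apply h; simp only [letterSeries, Bool.false_eq_true, if_false, invGenSeries]
      rw [if_neg hc]

lemma Pl_support : ∀ (L : List (I × Bool)) (w : List I), Pl L w ≠ 0 →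
    ∀ x ∈ w, x ∈ L.map Prod.fst := by
  intro L
  induction L with
  | nil =>
    intro w h x hx
    cases w with
    | nil => simp at hx
    | cons a t =>
      exfalso
      apply h
      rw [Pl_nil]
      exact oneSeries_ne (by simp)
  | cons p L' ih =>
    intro w h x hx
    rw [Pl_cons, conv] at h
    obtain ⟨k, hk, hne⟩ : ∃ k ∈ Finset.range (w.length + 1),
        letterSeries p (w.take k) * Pl L' (w.drop k) ≠ 0 := by
      by_contra hall
      push_neg at hall
      exact h (Finset.sum_eq_zero hall)
    have h1 : letterSeries p (w.take k) ≠ 0 := fun hz => hne (by rw [hz, zero_mul])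
    have h2 : Pl L' (w.drop k) ≠ 0 := fun hz => hne (by rw [hz, mul_zero])
    have hx' : x ∈ w.take k ∨ x ∈ w.drop k := by
      rw [← List.mem_append, List.take_append_drop]; exact hx
    rw [List.map_cons]
    rcases hx' with hx' | hx'
    · rw [letter_support h1 x hx']; exact List.mem_cons_self
    · exact List.mem_cons_of_mem _ (ih _ h2 x hx')

lemma finite_words (A : Finset I) : ∀ n : ℕ,
    {l : List I | l.length = n ∧ ∀ x ∈ l, x ∈ A}.Finite := by
  intro n
  induction n with
  | zero =>
    apply Set.Finite.subset (Set.finite_singleton ([] : List I))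
    rintro l ⟨hl, -⟩
    simp [List.length_eq_zero_iff.mp hl]
  | succ n ih =>
    apply Set.Finite.subset (Set.Finite.image (fun p : I × List I => p.1 :: p.2)
      ((A.finite_toSet.prod ih)))
    rintro l ⟨hl, hmem⟩
    cases l with
    | nil => simp at hl
    | cons a t =>
      refine ⟨(a, t), ⟨?_, ?_, ?_⟩, rfl⟩
      · exact hmem a (List.mem_cons_self)
      · simpa using hl
      · intro x hx; exact hmem x (List.mem_cons_of_mem _ hx)

lemma magnus_trichot {a b : FreeGroup I} (hne : a ≠ b) : magnusLt a b ∨ magnusLt b a := by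
  set f := magnus a with hf
  set g := magnus b with hg
  have hfg : f ≠ g := fun h => hne (magnus_inj h)
  obtain ⟨v₀, hv₀⟩ := Function.ne_iff.mp hfg
  set N := {n : ℕ | ∃ v : List I, f v ≠ g v ∧ v.length = n} with hN
  have hNne : N.Nonempty := ⟨v₀.length, v₀, hv₀, rfl⟩
  set n₀ := sInf N with hn₀
  obtain ⟨w₁, hw₁, hw₁len⟩ : ∃ v : List I, f v ≠ g v ∧ v.length = n₀ := Nat.sInf_mem hNne
  have hminlen : ∀ v : List I, f v ≠ g v → n₀ ≤ v.length := by
    intro v hv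
    exact Nat.sInf_le ⟨v, hv, rfl⟩
  set A := (a.toWord.map Prod.fst ++ b.toWord.map Prod.fst).toFinset with hA
  set T := {v : List I | f v ≠ g v ∧ v.length = n₀} with hT
  have hTsub : T ⊆ {l : List I | l.length = n₀ ∧ ∀ x ∈ l, x ∈ A} := by
    rintro v ⟨hv1, hv2⟩
    refine ⟨hv2, ?_⟩
    intro x hx
    rw [hA, List.mem_toFinset, List.mem_append]
    by_cases hfv : f v = 0
    · have hgv : g v ≠ 0 := by rw [← hfv]; exact fun h => hv1 h.symm
      exact Or.inr (Pl_support _ _ hgv x hx)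
    · exact Or.inl (Pl_support _ _ hfv x hx)
  have hTfin : T.Finite := Set.Finite.subset (finite_words A n₀) hTsub
  have hTne : (hTfin.toFinset).Nonempty := by
    rw [Set.Finite.toFinset_nonempty]
    exact ⟨w₁, hw₁, hw₁len⟩
  obtain ⟨w₀, hw₀mem, hw₀min⟩ : ∃ m ∈ hTfin.toFinset, ∀ x ∈ hTfin.toFinset, ¬ List.Lex (· < ·) x m := by
    obtain ⟨m, hm⟩ := Finset.exists_minimal hTne
    exact ⟨m, hm.1, fun x hx hlt => (hm.not_lt hx) hlt⟩
  rw [Set.Finite.mem_toFinset] at hw₀mem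
  obtain ⟨hw₀ne, hw₀len⟩ := hw₀mem
  have hbelow : ∀ v : List I, monLt v w₀ → f v = g v := by
    intro v hv
    by_contra hvne
    rcases hv with hv | ⟨hlen, hlex⟩
    · have := hminlen v hvne
      omega
    · have hvT : v ∈ hTfin.toFinset := by
        rw [Set.Finite.mem_toFinset]
        exact ⟨hvne, by omega⟩
      exact hw₀min v hvT hlex
  rcases lt_trichotomy (f w₀) (g w₀) with hlt | heq | hgt
  · exact Or.inl ⟨w₀, hlt, hbelow⟩
  · exact absurd heq hw₀ne
  · exact Or.inr ⟨w₀, hgt, fun v hv => (hbelow v hv).symm⟩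

end Order

end MagnusBiOrder

set_option linter.unusedSectionVars false in
theorem magnusOrder_is_biOrder {I : Type*} [LinearOrder I] [DecidableEq I] :
    IsStrictTotalOrder (FreeGroup I) magnusLt ∧
    ∀ a b c : FreeGroup I, magnusLt a b →
      magnusLt (a * c) (b * c) ∧ magnusLt (c * a) (c * b) := by
  constructor
  · refine { trichotomous := ?_, irrefl := ?_, trans := ?_ }
    · intro a b hab hba
      rcases eq_or_ne a b with h | h
      · exact h
      · rcases magnus_trichot h with h' | h'
        · exact absurd h' hab
        · exact absurd h' hba
    · rintro a ⟨w, hw, -⟩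
      exact lt_irrefl _ hw
    · intro a b c
      exact seriesLt_trans
  · intro a b c h
    refine ⟨?_, ?_⟩
    · show seriesLt (magnus (a * c)) (magnus (b * c))
      rw [magnus_mul, magnus_mul]
      exact seriesLt_conv_right _ _ _ (magnus_nil_coeff c) h
    · show seriesLt (magnus (c * a)) (magnus (c * b))
      rw [magnus_mul, magnus_mul]
      exact seriesLt_conv_left _ _ _ (magnus_nil_coeff c) h
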